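/- Let M be a differentiable curve in ℝⁿ parameterized by a diffeomorphism f : I → ℝⁿ with f₁(x) = x and sup_{x∈I}|f'(x)|_∞ < ∞, and let μ be the induced measure on M. Assume M is extremal, i.e. for every ε > 0 the set S_n(ε) ∩ M := {y ∈ M : ‖qy‖ < |q|^{-1/n-ε} for infinitely many q ∈ ℤ \ {0}} has μ-measure zero. Then for every θ ∈ ℝⁿ and every ε > 0, the set S_n^θ(ε) ∩ M := {y ∈ M : ‖qy + θ‖ < |q|^{-1/n-ε} for infinitely many q ∈ ℤ \ {0}} has μ-measure zero. -/

import Mathlib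

open Real MeasureTheory Filter Set

/-- Distance from a real number to the nearest integer. -/
noncomputable def dnint (t : ℝ) : ℝ := |t - round t|

/-- `‖y‖`: max over coordinates of the distance to the nearest integer. -/
noncomputable def vnorm {n : ℕ} (y : Fin n → ℝ) : ℝ := ⨆ i, dnint (y i)

/-- Supremum norm of an integer vector, as a real number. -/
noncomputable def isupnorm {n : ℕ} (q : Fin n → ℤ) : ℝ := ⨆ i, |(q i : ℝ)|

/-- The simultaneous Diophantine exponent
`w₀(x) = sup {w : ‖q x‖ < q^{-w} for infinitely many q ∈ ℕ}`. -/
noncomputable def wsim (n : ℕ) (x : Fin n → ℝ) : EReal :=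
  sSup {w : EReal | ∃ v : ℝ, w = (v : EReal) ∧
    {q : ℕ | 0 < q ∧ vnorm (fun i => (q : ℝ) * x i) < (q : ℝ) ^ (-v)}.Infinite}

/-- The dual Diophantine exponent
`w_{n-1}(x) = sup {w : ‖q.x‖ < |q|^{-w} for infinitely many q ∈ ℤⁿ \ {0}}`. -/
noncomputable def wdual (n : ℕ) (x : Fin n → ℝ) : EReal :=
  sSup {w : EReal | ∃ v : ℝ, w = (v : EReal) ∧
    {q : Fin n → ℤ | q ≠ 0 ∧
      dnint (∑ i, (q i : ℝ) * x i) < isupnorm q ^ (-v)}.Infinite}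

lemma dnint_nonneg (t : ℝ) : 0 ≤ dnint t := abs_nonneg _

lemma dnint_le_int (t : ℝ) (m : ℤ) : dnint t ≤ |t - m| := by
  by_cases h : m = round t
  · simp [dnint, h]
  · have h0 : round t - m ≠ 0 := sub_ne_zero.mpr (fun hc => h hc.symm)
    have h1 : (1:ℝ) ≤ |(round t : ℝ) - m| := by
      have := Int.one_le_abs h0
      calc (1:ℝ) ≤ ((|round t - m| : ℤ) : ℝ) := by exact_mod_cast this
        _ = |(round t : ℝ) - m| := by push_cast; rfl
    have h2 : dnint t ≤ 1/2 := abs_sub_round t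
    have h3 : |(round t:ℝ) - m| ≤ |t - round t| + |t - m| := by
      have he : (round t:ℝ) - m = -(t - round t) + (t - m) := by ring
      rw [he]
      exact (abs_add_le _ _).trans (by rw [abs_neg])
    have : dnint t = |t - round t| := rfl
    unfold dnint
    linarith [this]

lemma dnint_add_le (x y : ℝ) : dnint (x + y) ≤ dnint x + dnint y := by
  calc dnint (x+y) ≤ |x + y - ((round x + round y : ℤ) : ℝ)| := dnint_le_int _ _
    _ ≤ dnint x + dnint y := by
        unfold dnint
        have he : x + y - ((round x + round y : ℤ) : ℝ)
            = (x - round x) + (y - round y) := by push_cast; ring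
        rw [he]; exact abs_add_le _ _

lemma dnint_sub_le (x y : ℝ) : dnint (x - y) ≤ dnint x + dnint y := by
  calc dnint (x-y) ≤ |x - y - ((round x - round y : ℤ) : ℝ)| := dnint_le_int _ _
    _ ≤ dnint x + dnint y := by
        unfold dnint
        have he : x - y - ((round x - round y : ℤ) : ℝ)
            = (x - round x) - (y - round y) := by push_cast; ring
        rw [he]; exact abs_sub _ _

lemma dnint_add_abs_le (x e : ℝ) : dnint (x + e) ≤ dnint x + |e| := by
  calc dnint (x+e) ≤ |x + e - round x| := dnint_le_int _ _
    _ ≤ dnint x + |e| := by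
        unfold dnint
        have he : x + e - (round x : ℝ) = (x - round x) + e := by ring
        rw [he]; exact abs_add_le _ _

lemma dnint_eq_zero {t : ℝ} (h : dnint t = 0) : ∃ m : ℤ, t = m := by
  refine ⟨round t, ?_⟩
  have := abs_eq_zero.mp h
  linarith

lemma coord_le_vnorm {n : ℕ} (y : Fin n → ℝ) (i : Fin n) : dnint (y i) ≤ vnorm y :=
  le_ciSup (f := fun i => dnint (y i)) (Set.Finite.bddAbove (Set.finite_range _)) i

lemma vnorm_le {n : ℕ} [Nonempty (Fin n)] (y : Fin n → ℝ) {c : ℝ}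
    (h : ∀ i, dnint (y i) ≤ c) : vnorm y ≤ c := ciSup_le h

lemma pow_rpow_comm (e : ℝ) (t : ℕ) : ((2:ℝ)^t) ^ e = ((2:ℝ) ^ e) ^ t := by
  rw [← Real.rpow_natCast ((2:ℝ)^e) t, ← Real.rpow_natCast (2:ℝ) t,
    ← Real.rpow_mul (by norm_num), ← Real.rpow_mul (by norm_num), mul_comm]

/-- counting in a small window: at most one integer target. -/
lemma window_bound (q : ℤ) (θ₀ w ρ δ : ℝ) (hδ : 0 < δ) (hδ' : δ ≤ 1/4)
    (hρ : 0 ≤ ρ) (hsmall : |(q:ℝ)| * ρ ≤ 1/4) (hq : (q:ℝ) ≠ 0) :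
    volume {x : ℝ | x ∈ Icc w (w+ρ) ∧ dnint ((q:ℝ)*x + θ₀) < δ}
      ≤ ENNReal.ofReal (2*δ/|(q:ℝ)|) := by
  by_cases hS : {x : ℝ | x ∈ Icc w (w+ρ) ∧ dnint ((q:ℝ)*x + θ₀) < δ} = ∅
  · rw [hS]; simp
  · obtain ⟨x₁, hx₁⟩ := Set.nonempty_iff_ne_empty.mpr hS
    set m₁ := round ((q:ℝ)*x₁ + θ₀) with hm₁
    have hqR : (0:ℝ) < |(q:ℝ)| := abs_pos.mpr hq
    have key : {x : ℝ | x ∈ Icc w (w+ρ) ∧ dnint ((q:ℝ)*x + θ₀) < δ}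
        ⊆ Metric.ball (((m₁:ℝ) - θ₀)/q) (δ/|(q:ℝ)|) := by
      rintro y ⟨hyI, hyd⟩
      set my := round ((q:ℝ)*y + θ₀) with hmy
      have hyx : |y - x₁| ≤ ρ := by
        rw [abs_sub_le_iff]
        constructor <;> [skip; skip] <;>
          · obtain ⟨h1, h2⟩ := hyI; obtain ⟨⟨h3, h4⟩, _⟩ := hx₁; linarith
      have h1 : |(q:ℝ)*x₁ + θ₀ - m₁| < δ := hx₁.2
      have h1' : |(q:ℝ)*y + θ₀ - my| < δ := hyd
      have h2 : |(q:ℝ)*y - (q:ℝ)*x₁| ≤ |(q:ℝ)| * ρ := by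
        rw [← mul_sub, abs_mul]
        exact mul_le_mul_of_nonneg_left hyx (abs_nonneg _)
      have hd : |(my:ℝ) - m₁| < 1 := by
        have he : (my:ℝ) - m₁ = -((q:ℝ)*y + θ₀ - my) + ((q:ℝ)*y - (q:ℝ)*x₁)
            + ((q:ℝ)*x₁ + θ₀ - m₁) := by ring
        calc |(my:ℝ) - m₁| ≤ |(q:ℝ)*y + θ₀ - my| + |(q:ℝ)*y - (q:ℝ)*x₁|
              + |(q:ℝ)*x₁ + θ₀ - m₁| := by
                rw [he]
                exact (abs_add_le _ _).trans (add_le_add_left ((abs_add_le _ _).trans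
                  (add_le_add_left (by rw [abs_neg]) _)) _)
          _ < 1 := by linarith
      have hmm : my = m₁ := by
        have h5 : |((my - m₁ : ℤ) : ℝ)| < 1 := by push_cast; exact hd
        have h6 : |my - m₁| < 1 := by exact_mod_cast h5
        have h7 := abs_lt.mp h6
        omega
      rw [Metric.mem_ball, Real.dist_eq]
      have he2 : y - ((m₁:ℝ) - θ₀)/q = ((q:ℝ)*y + θ₀ - m₁)/q := by field_simp; ring
      rw [he2, abs_div]
      rw [hmm] at h1'
      exact div_lt_div_of_pos_right h1' hqR
    calc volume {x : ℝ | x ∈ Icc w (w+ρ) ∧ dnint ((q:ℝ)*x + θ₀) < δ}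
        ≤ volume (Metric.ball (((m₁:ℝ) - θ₀)/q) (δ/|(q:ℝ)|)) := measure_mono key
      _ = ENNReal.ofReal (2*(δ/|(q:ℝ)|)) := Real.volume_ball _ _
      _ = ENNReal.ofReal (2*δ/|(q:ℝ)|) := by rw [mul_div_assoc]

set_option maxHeartbeats 1600000 in
/-- Theorem 1* for curves: let `M` be the differentiable curve parameterised by
`f : I → ℝⁿ` in Monge form (`f₁(x) = x`, so `f` is a diffeomorphism onto `M`)
with `sup_I |f'|_∞ ≤ C < ∞`, and let the induced measure on `M` correspond to
Lebesgue measure on the parameter interval.  If `M` is extremal, i.e. for every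
`ε > 0` the set `S_n(ε) ∩ M` is null, then for every `θ ∈ ℝⁿ` and `ε > 0` the
set `S_n^θ(ε) ∩ M` is null. -/
theorem extremal_curve_implies_SIE
    (n : ℕ) (hn : 0 < n) (a b : ℝ) (hab : a < b)
    (f f' : ℝ → Fin n → ℝ)
    (hderiv : ∀ x ∈ Icc a b, HasDerivAt f (f' x) x)
    (hf1 : ∀ x ∈ Icc a b, f x ⟨0, hn⟩ = x)
    (C : ℝ) (hC : ∀ x ∈ Icc a b, (⨆ i, |f' x i|) ≤ C)
    (hext : ∀ ε : ℝ, 0 < ε →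
      volume {x ∈ Icc a b | {q : ℤ | q ≠ 0 ∧
        vnorm (fun i => (q : ℝ) * f x i)
          < |(q : ℝ)| ^ (-(1 / (n : ℝ)) - ε)}.Infinite} = 0) :
    ∀ (θ : Fin n → ℝ) (ε : ℝ), 0 < ε →
      volume {x ∈ Icc a b | {q : ℤ | q ≠ 0 ∧
        vnorm (fun i => (q : ℝ) * f x i + θ i)
          < |(q : ℝ)| ^ (-(1 / (n : ℝ)) - ε)}.Infinite} = 0 := by
  haveI : Nonempty (Fin n) := ⟨⟨0, hn⟩⟩
  -- Reduce to the case ε ≤ 1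
  suffices H : ∀ (θ : Fin n → ℝ) (ε : ℝ), 0 < ε → ε ≤ 1 →
      volume {x ∈ Icc a b | {q : ℤ | q ≠ 0 ∧
        vnorm (fun i => (q : ℝ) * f x i + θ i)
          < |(q : ℝ)| ^ (-(1 / (n : ℝ)) - ε)}.Infinite} = 0 by
    intro θ ε hε
    refine measure_mono_null ?_ (H θ (min ε 1) (lt_min hε one_pos) (min_le_right _ _))
    rintro x ⟨hxI, hxS⟩
    refine ⟨hxI, hxS.mono ?_⟩
    rintro q ⟨hq0, hqv⟩
    refine ⟨hq0, lt_of_lt_of_le hqv ?_⟩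
    apply Real.rpow_le_rpow_of_exponent_le
    · have h1 : (1:ℤ) ≤ |q| := Int.one_le_abs hq0
      calc (1:ℝ) ≤ ((|q| : ℤ) : ℝ) := by exact_mod_cast h1
        _ = |(q:ℝ)| := by push_cast; rfl
    · have := min_le_left ε 1; linarith
  intro θ ε hε hε1
  have hn0 : (0:ℝ) < (n:ℝ) := by exact_mod_cast hn
  have hinv : (0:ℝ) ≤ 1/(n:ℝ) := by positivity
  have hba : (0:ℝ) ≤ b - a := by linarith
  have hC0 : (0:ℝ) ≤ C := by
    have h1 : |f' a ⟨0,hn⟩| ≤ ⨆ i, |f' a i| :=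
      le_ciSup (f := fun i => |f' a i|) (Set.Finite.bddAbove (Set.finite_range _)) _
    exact le_trans (abs_nonneg _) (h1.trans (hC a (left_mem_Icc.mpr hab.le)))
  have hC1 : (0:ℝ) < C + 1 := by linarith
  set i₀ : Fin n := ⟨0, hn⟩ with hi₀
  set e₁ : ℝ := -(1 / (n:ℝ)) - ε with he₁
  set e₂ : ℝ := -(1 / (n:ℝ)) - ε/2 with he₂
  have he₁0 : e₁ < 0 := by rw [he₁]; linarith
  have he₂0 : e₂ < 0 := by rw [he₂]; linarith
  have he₁₂ : e₁ = e₂ + (-(ε/2)) := by rw [he₁, he₂]; ring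
  -- Lipschitz bound on every coordinate of f
  have hlip : ∀ (i : Fin n), ∀ x ∈ Icc a b, ∀ y ∈ Icc a b,
      |f x i - f y i| ≤ C * |x - y| := by
    intro i x hx y hy
    have := (convex_Icc a b).norm_image_sub_le_of_norm_hasDerivWithin_le
      (f := fun z => f z i) (f' := fun z => f' z i)
      (fun z hz => ((hasDerivAt_pi.mp (hderiv z hz)) i).hasDerivWithinAt)
      (fun z hz => by
        have h1 : |f' z i| ≤ ⨆ k, |f' z k| :=
          le_ciSup (f := fun k => |f' z k|) (Set.Finite.bddAbove (Set.finite_range _)) i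
        simpa [Real.norm_eq_abs] using h1.trans (hC z hz)) hy hx
    simpa [Real.norm_eq_abs] using this
  have hv0 : ∀ y : Fin n → ℝ, 0 ≤ vnorm y :=
    fun y => le_trans (dnint_nonneg _) (coord_le_vnorm y i₀)
  have h2t : ∀ t : ℕ, (0:ℝ) < 2^t := fun t => by positivity
  have h2t1 : ∀ t : ℕ, (1:ℝ) ≤ 2^t := fun t => one_le_pow₀ one_le_two
  -- the scale functions
  set ψ : ℕ → ℝ := fun t => ((2:ℝ)^t) ^ e₁ with hψdef
  have hψpos : ∀ t, 0 < ψ t := fun t => Real.rpow_pos_of_pos (h2t t) _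
  set X : ℕ → ℝ := fun t => ((2:ℝ)^(t+2)) ^ e₂ with hXdef
  have hXpos : ∀ t, 0 < X t := fun t => Real.rpow_pos_of_pos (h2t _) _
  have hXle1 : ∀ t, X t ≤ 1 :=
    fun t => Real.rpow_le_one_of_one_le_of_nonpos (h2t1 _) he₂0.le
  set ρ : ℕ → ℕ → ℝ := fun j t => ((j:ℝ)+1)⁻¹ * X t / (4 * 2^(t+1) * (C+1)) with hρdef
  have hκpos : ∀ j : ℕ, (0:ℝ) < ((j:ℝ)+1)⁻¹ := fun j => by positivity
  have hκle1 : ∀ j : ℕ, ((j:ℝ)+1)⁻¹ ≤ 1 := by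
    intro j
    rw [inv_le_one_iff₀]
    right; linarith [Nat.cast_nonneg (α := ℝ) j]
  have hρpos : ∀ j t, 0 < ρ j t := by
    intro j t
    simp only [hρdef]
    have h1 := hXpos t
    have h2 := hκpos j
    have h3 := h2t (t+1)
    positivity
  have hXeq : ∀ t, X t = (4:ℝ)^e₂ * ((2:ℝ)^t)^e₂ := by
    intro t
    simp only [hXdef]
    have h24 : (2:ℝ)^(t+2) = (2:ℝ)^t * 4 := by rw [pow_add]; norm_num
    rw [h24, Real.mul_rpow (h2t t).le (by norm_num), mul_comm]
  have hψeq : ∀ t, ψ t = ((2:ℝ)^t)^e₂ * ((2:ℝ)^(-(ε/2)))^t := by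
    intro t
    simp only [hψdef]
    rw [he₁₂, Real.rpow_add (h2t t), pow_rpow_comm (-(ε/2)) t]
  -- choice of the threshold level T j
  have hTex : ∀ j : ℕ, ∃ T : ℕ, ∀ t, T ≤ t →
      2 * ψ t ≤ ((j:ℝ)+1)⁻¹/4 * X t ∧ ψ t ≤ 1/4 := by
    intro j
    have hr0 : (0:ℝ) ≤ (2:ℝ) ^ (-(ε/2)) := (Real.rpow_pos_of_pos two_pos _).le
    have hr1 : (2:ℝ) ^ (-(ε/2)) < 1 :=
      Real.rpow_lt_one_of_one_lt_of_neg one_lt_two (by linarith)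
    have hs0 : (0:ℝ) ≤ (2:ℝ) ^ e₁ := (Real.rpow_pos_of_pos two_pos _).le
    have hs1 : (2:ℝ) ^ e₁ < 1 := Real.rpow_lt_one_of_one_lt_of_neg one_lt_two he₁0
    have hclim : (0:ℝ) < ((j:ℝ)+1)⁻¹ * (4:ℝ)^e₂ / 8 := by
      have h1 := hκpos j
      have h2 : (0:ℝ) < (4:ℝ)^e₂ := Real.rpow_pos_of_pos (by norm_num) _
      positivity
    have t1 := tendsto_pow_atTop_nhds_zero_of_lt_one hr0 hr1
    have t2 := tendsto_pow_atTop_nhds_zero_of_lt_one hs0 hs1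
    have ev1 : ∀ᶠ t : ℕ in atTop,
        ((2:ℝ)^(-(ε/2)))^t ≤ ((j:ℝ)+1)⁻¹ * (4:ℝ)^e₂ / 8 := t1.eventually_le_const hclim
    have ev2 : ∀ᶠ t : ℕ in atTop, ((2:ℝ)^e₁)^t ≤ 1/4 := t2.eventually_le_const (by norm_num)
    obtain ⟨T, hT⟩ := Filter.eventually_atTop.mp (ev1.and ev2)
    refine ⟨T, fun t ht => ?_⟩
    obtain ⟨h1, h2⟩ := hT t ht
    constructor
    · have hP : (0:ℝ) < ((2:ℝ)^t)^e₂ := Real.rpow_pos_of_pos (h2t t) _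
      rw [hψeq t, hXeq t]
      calc 2 * (((2:ℝ)^t)^e₂ * ((2:ℝ)^(-(ε/2)))^t)
          ≤ 2 * (((2:ℝ)^t)^e₂ * (((j:ℝ)+1)⁻¹ * (4:ℝ)^e₂ / 8)) := by
            apply mul_le_mul_of_nonneg_left (mul_le_mul_of_nonneg_left h1 hP.le) (by norm_num)
        _ = ((j:ℝ)+1)⁻¹/4 * ((4:ℝ)^e₂ * ((2:ℝ)^t)^e₂) := by ring
    · simp only [hψdef]
      rw [pow_rpow_comm]
      exact h2
  choose T hT using hTex
  -- the key separation estimate coming from the homogeneous repulsion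
  have hsep : ∀ (j t : ℕ), (2 * ψ t ≤ ((j:ℝ)+1)⁻¹/4 * X t) →
      ∀ x₀ ∈ Icc a b,
      (∀ d : ℤ, d ≠ 0 → ((j:ℝ)+1)⁻¹ * |(d:ℝ)| ^ e₂ ≤ vnorm (fun i => (d:ℝ) * f x₀ i)) →
      ∀ y ∈ Icc a b, |x₀ - y| ≤ ρ j t →
      ∀ q₀ q' : ℤ, q₀ ≠ q' →
      (2:ℝ)^t ≤ |(q₀:ℝ)| → |(q₀:ℝ)| < 2^(t+1) →
      (2:ℝ)^t ≤ |(q':ℝ)| → |(q':ℝ)| < 2^(t+1) →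
      vnorm (fun i => (q₀:ℝ) * f x₀ i + θ i) < |(q₀:ℝ)| ^ e₁ →
      vnorm (fun i => (q':ℝ) * f y i + θ i) < |(q':ℝ)| ^ e₁ → False := by
    intro j t hc1 x₀ hx₀I hx₀K y hyI hxy q₀ q' hne hq₀l hq₀u hq'l hq'u hv₀ hv'
    have hd0 : q₀ - q' ≠ 0 := sub_ne_zero.mpr hne
    have hdpos : (0:ℝ) < |((q₀ - q' : ℤ) : ℝ)| := by
      rw [abs_pos]
      exact_mod_cast hd0
    have hdle : |((q₀ - q' : ℤ) : ℝ)| ≤ 2^(t+2) := by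
      push_cast
      calc |(q₀:ℝ) - (q':ℝ)| ≤ |(q₀:ℝ)| + |(q':ℝ)| := abs_sub _ _
        _ ≤ 2^(t+1) + 2^(t+1) := by linarith
        _ = 2^(t+2) := by ring
    have hκX : ((j:ℝ)+1)⁻¹ * X t ≤ vnorm (fun i => ((q₀ - q' : ℤ):ℝ) * f x₀ i) := by
      refine le_trans ?_ (hx₀K _ hd0)
      refine mul_le_mul_of_nonneg_left ?_ (hκpos j).le
      simp only [hXdef]
      exact Real.rpow_le_rpow_of_nonpos hdpos hdle he₂0.le
    have hq₀ψ : |(q₀:ℝ)| ^ e₁ ≤ ψ t := by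
      simp only [hψdef]
      exact Real.rpow_le_rpow_of_nonpos (h2t t) hq₀l he₁0.le
    have hq'ψ : |(q':ℝ)| ^ e₁ ≤ ψ t := by
      simp only [hψdef]
      exact Real.rpow_le_rpow_of_nonpos (h2t t) hq'l he₁0.le
    have hup : vnorm (fun i => ((q₀ - q' : ℤ):ℝ) * f x₀ i)
        ≤ 2 * ψ t + C * 2^(t+1) * ρ j t := by
      apply vnorm_le
      intro i
      have e1 : ((q₀ - q' : ℤ):ℝ) * f x₀ i
          = ((q₀:ℝ)*f x₀ i + θ i) - ((q':ℝ)*f x₀ i + θ i) := by push_cast; ring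
      have h1 : dnint ((q₀:ℝ)*f x₀ i + θ i) ≤ ψ t :=
        le_trans (coord_le_vnorm (fun i => (q₀:ℝ)*f x₀ i + θ i) i) (le_trans hv₀.le hq₀ψ)
      have h2 : dnint ((q':ℝ)*f x₀ i + θ i) ≤ ψ t + C * 2^(t+1) * ρ j t := by
        have e2 : (q':ℝ)*f x₀ i + θ i
            = ((q':ℝ)*f y i + θ i) + (q':ℝ)*(f x₀ i - f y i) := by ring
        have h3 : dnint ((q':ℝ)*f y i + θ i) ≤ ψ t :=
          le_trans (coord_le_vnorm (fun i => (q':ℝ)*f y i + θ i) i) (le_trans hv'.le hq'ψ)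
        have h4 : |(q':ℝ)*(f x₀ i - f y i)| ≤ 2^(t+1) * (C * ρ j t) := by
          rw [abs_mul]
          exact mul_le_mul hq'u.le
            (le_trans (hlip i x₀ hx₀I y hyI) (mul_le_mul_of_nonneg_left hxy hC0))
            (abs_nonneg _) (h2t (t+1)).le
        calc dnint ((q':ℝ)*f x₀ i + θ i)
            ≤ dnint ((q':ℝ)*f y i + θ i) + |(q':ℝ)*(f x₀ i - f y i)| := by
              rw [e2]; exact dnint_add_abs_le _ _
          _ ≤ ψ t + C * 2^(t+1) * ρ j t := by linarith
      calc dnint (((q₀ - q' : ℤ):ℝ) * f x₀ i)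
          ≤ dnint ((q₀:ℝ)*f x₀ i + θ i) + dnint ((q':ℝ)*f x₀ i + θ i) := by
            rw [e1]; exact dnint_sub_le _ _
        _ ≤ 2 * ψ t + C * 2^(t+1) * ρ j t := by linarith
    have hc2 : C * 2^(t+1) * ρ j t ≤ ((j:ℝ)+1)⁻¹/4 * X t := by
      simp only [hρdef]
      have heq : C * 2^(t+1) * (((j:ℝ)+1)⁻¹ * X t / (4 * 2^(t+1) * (C+1)))
          = ((j:ℝ)+1)⁻¹/4 * X t * (C / (C+1)) := by
        field_simp
      rw [heq]
      have h5 : C / (C+1) ≤ 1 := by rw [div_le_one hC1]; linarith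
      have h6 : 0 ≤ ((j:ℝ)+1)⁻¹/4 * X t := by
        have := hXpos t
        have := hκpos j
        positivity
      nlinarith [mul_le_mul_of_nonneg_left h5 h6]
    have hfin : 0 < ((j:ℝ)+1)⁻¹ * X t := mul_pos (hκpos j) (hXpos t)
    linarith
  -- the sets K, E and G
  set K : ℕ → Set ℝ := fun j => {x ∈ Icc a b | ∀ d : ℤ, d ≠ 0 →
      ((j:ℝ)+1)⁻¹ * |(d:ℝ)| ^ e₂ ≤ vnorm (fun i => (d:ℝ) * f x i)} with hKdef
  set E : ℕ → Set ℝ := fun t => {x ∈ Icc a b | ∃ q : ℤ,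
      ((2:ℝ)^t ≤ |(q:ℝ)| ∧ |(q:ℝ)| < 2^(t+1)) ∧
        vnorm (fun i => (q:ℝ) * f x i + θ i) < |(q:ℝ)| ^ e₁} with hEdef
  set G : ℕ → ℕ → Set ℝ := fun j t => if T j ≤ t then E t ∩ K j else ∅ with hGdef
  -- the per-window measure bound
  have hwin : ∀ (j t : ℕ), (2 * ψ t ≤ ((j:ℝ)+1)⁻¹/4 * X t) → ψ t ≤ 1/4 → ∀ w : ℝ,
      volume (E t ∩ K j ∩ Icc w (w + ρ j t)) ≤ ENNReal.ofReal (2 * ψ t / 2^t) := by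
    intro j t hc1 hψ4 w
    by_cases hne : (E t ∩ K j ∩ Icc w (w + ρ j t)).Nonempty
    · obtain ⟨x₀, ⟨hx₀E, hx₀K⟩, hx₀W⟩ := hne
      simp only [hEdef, Set.mem_setOf_eq] at hx₀E
      simp only [hKdef, Set.mem_setOf_eq] at hx₀K
      obtain ⟨hx₀I, q₀, ⟨hq₀l, hq₀u⟩, hq₀v⟩ := hx₀E
      have hq₀1 : (1:ℝ) ≤ |(q₀:ℝ)| := le_trans (h2t1 t) hq₀l
      have hq₀0 : (q₀:ℝ) ≠ 0 := by
        intro hzero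
        rw [hzero, abs_zero] at hq₀1
        linarith
      have hsub2 : E t ∩ K j ∩ Icc w (w + ρ j t)
          ⊆ {x : ℝ | x ∈ Icc w (w + ρ j t) ∧ dnint ((q₀:ℝ)*x + θ i₀) < ψ t} := by
        rintro y ⟨⟨hyE, hyK⟩, hyW⟩
        simp only [hEdef, Set.mem_setOf_eq] at hyE
        obtain ⟨hyI, q', ⟨hq'l, hq'u⟩, hq'v⟩ := hyE
        refine ⟨hyW, ?_⟩
        rcases eq_or_ne q' q₀ with hqq | hqq
        · subst hqq
          have hcoord := coord_le_vnorm (fun i => (q':ℝ) * f y i + θ i) i₀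
          have hfy : f y i₀ = y := hf1 y hyI
          have hlt : dnint ((q':ℝ) * y + θ i₀) < |(q':ℝ)|^e₁ := by
            have : dnint ((q':ℝ) * f y i₀ + θ i₀) < |(q':ℝ)|^e₁ :=
              lt_of_le_of_lt hcoord hq'v
            rwa [hfy] at this
          refine lt_of_lt_of_le hlt ?_
          simp only [hψdef]
          exact Real.rpow_le_rpow_of_nonpos (h2t t) hq'l he₁0.le
        · exfalso
          have hxyd : |x₀ - y| ≤ ρ j t := by
            rw [abs_sub_le_iff]
            obtain ⟨ha1, ha2⟩ := hx₀W
            obtain ⟨hb1, hb2⟩ := hyW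
            constructor <;> linarith
          exact hsep j t hc1 x₀ hx₀I hx₀K.2 y hyI hxyd q₀ q' (Ne.symm hqq)
            hq₀l hq₀u hq'l hq'u hq₀v hq'v
      calc volume (E t ∩ K j ∩ Icc w (w + ρ j t))
          ≤ volume {x : ℝ | x ∈ Icc w (w + ρ j t) ∧ dnint ((q₀:ℝ)*x + θ i₀) < ψ t} :=
            measure_mono hsub2
        _ ≤ ENNReal.ofReal (2 * ψ t / |(q₀:ℝ)|) := by
            apply window_bound q₀ (θ i₀) w (ρ j t) (ψ t) (hψpos t) hψ4 (hρpos j t).le ?_ hq₀0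
            calc |(q₀:ℝ)| * ρ j t ≤ 2^(t+1) * ρ j t :=
                mul_le_mul_of_nonneg_right hq₀u.le (hρpos j t).le
              _ ≤ 1/4 := by
                  simp only [hρdef]
                  have heq : (2:ℝ)^(t+1) * (((j:ℝ)+1)⁻¹ * X t / (4 * 2^(t+1) * (C+1)))
                      = ((j:ℝ)+1)⁻¹ * X t / (4 * (C+1)) := by
                    field_simp
                  rw [heq]
                  have h7 : ((j:ℝ)+1)⁻¹ * X t ≤ 1 :=
                    mul_le_one₀ (hκle1 j) (hXpos t).le (hXle1 t)
                  rw [div_le_div_iff₀ (by linarith) (by norm_num)]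
                  nlinarith
        _ ≤ ENNReal.ofReal (2 * ψ t / 2^t) := by
            apply ENNReal.ofReal_le_ofReal
            gcongr
    · rw [Set.not_nonempty_iff_eq_empty] at hne
      rw [hne]
      simp
  -- the measure of E t ∩ K j
  have hmeasjt : ∀ (j t : ℕ), (2 * ψ t ≤ ((j:ℝ)+1)⁻¹/4 * X t) → ψ t ≤ 1/4 →
      volume (E t ∩ K j) ≤ ENNReal.ofReal (((b-a)/ρ j t + 1) * (2 * ψ t / 2^t)) := by
    intro j t hc1 hψ4
    set N : ℕ := ⌊(b-a)/ρ j t⌋₊ + 1 with hN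
    have hval : (0:ℝ) ≤ (b-a)/ρ j t := div_nonneg hba (hρpos j t).le
    have hcov : E t ∩ K j ⊆ ⋃ k ∈ Finset.range N,
        (E t ∩ K j ∩ Icc (a + k * ρ j t) (a + k * ρ j t + ρ j t)) := by
      intro x hx
      have hxI : x ∈ Icc a b := by
        have := hx.1
        simp only [hEdef, Set.mem_setOf_eq] at this
        exact this.1
      have hx0 : 0 ≤ (x - a)/ρ j t := div_nonneg (by linarith [hxI.1]) (hρpos j t).le
      refine Set.mem_iUnion₂.mpr ⟨⌊(x - a)/ρ j t⌋₊, Finset.mem_range.mpr ?_, hx, ?_, ?_⟩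
      · have h8 : ⌊(x - a)/ρ j t⌋₊ ≤ ⌊(b-a)/ρ j t⌋₊ := by
          apply Nat.floor_le_floor
          have h2b := hxI.2
          have hrp := (hρpos j t).le
          gcongr
        omega
      · have h9 := Nat.floor_le hx0
        rw [le_div_iff₀ (hρpos j t)] at h9
        linarith
      · have h9 := Nat.lt_floor_add_one ((x - a)/ρ j t)
        rw [div_lt_iff₀ (hρpos j t)] at h9
        push_cast at h9 ⊢
        linarith
    calc volume (E t ∩ K j)
        ≤ ∑ k ∈ Finset.range N,
            volume (E t ∩ K j ∩ Icc (a + k * ρ j t) (a + k * ρ j t + ρ j t)) :=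
          le_trans (measure_mono hcov) (measure_biUnion_finset_le _ _)
      _ ≤ ∑ k ∈ Finset.range N, ENNReal.ofReal (2 * ψ t / 2^t) :=
          Finset.sum_le_sum (fun k _ => hwin j t hc1 hψ4 (a + k * ρ j t))
      _ = (N : ENNReal) * ENNReal.ofReal (2 * ψ t / 2^t) := by
          rw [Finset.sum_const, Finset.card_range, nsmul_eq_mul]
      _ ≤ ENNReal.ofReal ((b-a)/ρ j t + 1) * ENNReal.ofReal (2 * ψ t / 2^t) := by
          apply mul_le_mul_left
          rw [← ENNReal.ofReal_natCast N]
          apply ENNReal.ofReal_le_ofReal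
          have h9 := Nat.floor_le hval
          push_cast [hN]
          linarith
      _ = ENNReal.ofReal (((b-a)/ρ j t + 1) * (2 * ψ t / 2^t)) := by
          rw [← ENNReal.ofReal_mul (by linarith)]
  -- the geometric bound
  have hgeom : ∀ (j t : ℕ), ((b-a)/ρ j t + 1) * (2 * ψ t / 2^t)
      ≤ (16*(b-a)*(C+1)*((j:ℝ)+1)*(4:ℝ)^(-e₂) + 2) * ((2:ℝ)^(-(ε/2)))^t := by
    intro j t
    have hP : (0:ℝ) < (2:ℝ)^t := h2t t
    set A := ((2:ℝ)^(-(ε/2)))^t with hA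
    have hA0 : (0:ℝ) < A := pow_pos (Real.rpow_pos_of_pos two_pos _) t
    have h4e : (0:ℝ) < (4:ℝ)^e₂ := Real.rpow_pos_of_pos (by norm_num) _
    have h4e' : (0:ℝ) < (4:ℝ)^(-e₂) := Real.rpow_pos_of_pos (by norm_num) _
    have h4inv : (4:ℝ)^(-e₂) = ((4:ℝ)^e₂)⁻¹ := by
      rw [Real.rpow_neg (by norm_num)]
    have hXX : X t * (4:ℝ)^(-e₂) = ((2:ℝ)^t)^e₂ := by
      rw [hXeq t, h4inv, mul_right_comm, mul_inv_cancel₀ h4e.ne', one_mul]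
    have hkey : ψ t = X t * (4:ℝ)^(-e₂) * A := by rw [hψeq t, hXX]
    have hρval : ρ j t = ((j:ℝ)+1)⁻¹ * X t / (4 * 2^(t+1) * (C+1)) := by
      simp only [hρdef]
    have hX0 : X t ≠ 0 := (hXpos t).ne'
    have hj0 : ((j:ℝ)+1) ≠ 0 := by positivity
    have hexp : (2:ℝ)^(t+1) = 2 * 2^t := by ring
    have lhs_eq : ∀ F Xv Av Pv jv : ℝ, Xv ≠ 0 → Pv ≠ 0 → (jv+1) ≠ 0 →
        ((b-a) / ((jv+1)⁻¹ * Xv / (4 * (2*Pv) * (C+1))) + 1)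
          * (2 * (Xv * F * Av) / Pv)
        = (16*(b-a)*(C+1)*(jv+1)*F) * Av + 2 * (Xv * F) * Av / Pv := by
      intro F Xv Av Pv jv hXv hPv hjv
      have hCne : (C+1:ℝ) ≠ 0 := hC1.ne'
      field_simp
      ring
    rw [hρval, hkey, hexp,
      lhs_eq ((4:ℝ)^(-e₂)) (X t) A ((2:ℝ)^t) (j:ℝ) hX0 hP.ne' hj0]
    have hle1 : ((2:ℝ)^t)^e₂ ≤ 1 := Real.rpow_le_one_of_one_le_of_nonpos (h2t1 t) he₂0.le
    have hpos2 : (0:ℝ) < ((2:ℝ)^t)^e₂ := Real.rpow_pos_of_pos hP _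
    have hpart2 : 2 * (X t * (4:ℝ)^(-e₂)) * A / 2^t ≤ 2 * A := by
      rw [hXX, div_le_iff₀ hP]
      nlinarith [mul_le_mul_of_nonneg_right hle1 hA0.le,
        mul_le_mul_of_nonneg_left (h2t1 t) (by positivity : (0:ℝ) ≤ 2*A)]
    linarith
  -- Borel–Cantelli for each j
  have hBC : ∀ j : ℕ, volume (Filter.atTop.limsup (G j)) = 0 := by
    intro j
    apply measure_limsup_atTop_eq_zero
    have hbound : ∀ t, volume (G j t)
        ≤ ENNReal.ofReal ((16*(b-a)*(C+1)*((j:ℝ)+1)*(4:ℝ)^(-e₂) + 2) * ((2:ℝ)^(-(ε/2)))^t) := by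
      intro t
      simp only [hGdef]
      split_ifs with h
      · exact le_trans (hmeasjt j t (hT j t h).1 (hT j t h).2)
          (ENNReal.ofReal_le_ofReal (hgeom j t))
      · simp
    have hsum : Summable (fun t : ℕ =>
        (16*(b-a)*(C+1)*((j:ℝ)+1)*(4:ℝ)^(-e₂) + 2) * ((2:ℝ)^(-(ε/2)))^t) :=
      (summable_geometric_of_lt_one (Real.rpow_pos_of_pos two_pos _).le
        (Real.rpow_lt_one_of_one_lt_of_neg one_lt_two (by linarith))).mul_left _
    have hnn : ∀ t : ℕ,
        0 ≤ (16*(b-a)*(C+1)*((j:ℝ)+1)*(4:ℝ)^(-e₂) + 2) * ((2:ℝ)^(-(ε/2)))^t := by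
      intro t
      have h4e' : (0:ℝ) ≤ (4:ℝ)^(-e₂) := (Real.rpow_pos_of_pos (by norm_num) _).le
      have h1 : (0:ℝ) ≤ 16*(b-a)*(C+1)*((j:ℝ)+1) := by
        apply mul_nonneg
        apply mul_nonneg
        apply mul_nonneg (by norm_num) hba
        · exact hC1.le
        · positivity
      have h2 : (0:ℝ) ≤ ((2:ℝ)^(-(ε/2)))^t := pow_nonneg (Real.rpow_pos_of_pos two_pos _).le t
      have h3 := mul_nonneg h1 h4e'
      exact mul_nonneg (by linarith) h2
    have hfinal : ∑' t, volume (G j t)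
        ≤ ENNReal.ofReal (∑' t : ℕ,
            (16*(b-a)*(C+1)*((j:ℝ)+1)*(4:ℝ)^(-e₂) + 2) * ((2:ℝ)^(-(ε/2)))^t) := by
      rw [ENNReal.ofReal_tsum_of_nonneg hnn hsum]
      exact ENNReal.tsum_le_tsum hbound
    exact ne_of_lt (lt_of_le_of_lt hfinal ENNReal.ofReal_lt_top)
  -- the null sets from extremality and rationality
  have hZ1 : volume {x ∈ Icc a b | {q : ℤ | q ≠ 0 ∧
      vnorm (fun i => (q:ℝ) * f x i) < |(q:ℝ)| ^ e₂}.Infinite} = 0 := by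
    rw [he₂]
    exact hext (ε/2) (by linarith)
  have hZ2 : volume {x : ℝ | ∃ m d : ℤ, d ≠ 0 ∧ (d:ℝ)*x = m} = 0 := by
    apply Set.Countable.measure_zero
    apply Set.Countable.mono ?_ (Set.countable_range (fun p : ℤ × ℤ => (p.1:ℝ)/(p.2:ℝ)))
    rintro x ⟨m, d, hd, hdx⟩
    refine ⟨(m, d), ?_⟩
    have hd' : (d:ℝ) ≠ 0 := Int.cast_ne_zero.mpr hd
    field_simp
    linarith [hdx]
  -- main inclusion
  have hsub : {x ∈ Icc a b | {q : ℤ | q ≠ 0 ∧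
        vnorm (fun i => (q:ℝ) * f x i + θ i) < |(q:ℝ)| ^ e₁}.Infinite}
      ⊆ ({x ∈ Icc a b | {q : ℤ | q ≠ 0 ∧
          vnorm (fun i => (q:ℝ) * f x i) < |(q:ℝ)| ^ e₂}.Infinite}
        ∪ {x : ℝ | ∃ m d : ℤ, d ≠ 0 ∧ (d:ℝ)*x = m})
        ∪ ⋃ j, Filter.atTop.limsup (G j) := by
    rintro x ⟨hxI, hxS⟩
    by_cases hk : ∃ j : ℕ, x ∈ K j
    · obtain ⟨j, hjK⟩ := hk
      refine Or.inr (Set.mem_iUnion.mpr ⟨j, ?_⟩)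
      rw [mem_limsup_iff_frequently_mem, Filter.frequently_atTop]
      intro t₀
      set t₁ := max t₀ (T j) with ht₁
      have hexq : ∃ q ∈ {q : ℤ | q ≠ 0 ∧
          vnorm (fun i => (q:ℝ) * f x i + θ i) < |(q:ℝ)| ^ e₁}, (2^t₁ : ℤ) ≤ |q| := by
        by_contra hcon
        push_neg at hcon
        apply hxS
        apply Set.Finite.subset (Set.finite_Icc (-(2^t₁ : ℤ)) (2^t₁))
        intro q hq
        have h10 := (hcon q hq).le
        rw [Set.mem_Icc]
        constructor
        · linarith [neg_abs_le q]
        · linarith [le_abs_self q]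
      obtain ⟨q, hqS, hqbig⟩ := hexq
      obtain ⟨hq0, hqv⟩ := hqS
      set m := q.natAbs with hm
      have hm1 : 2^t₁ ≤ m := by
        have h11 : (2^t₁ : ℤ) ≤ (m : ℤ) := by
          rw [hm]; rw [Int.abs_eq_natAbs] at hqbig; exact_mod_cast hqbig
        exact_mod_cast h11
      have hm0 : m ≠ 0 := by
        have := Nat.one_le_two_pow (n := t₁)
        omega
      set t := Nat.log 2 m with htdef
      have hlow : 2^t ≤ m := Nat.pow_log_le_self 2 hm0
      have hhigh : m < 2^(t+1) := Nat.lt_pow_succ_log_self (by norm_num) m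
      have ht₁t : t₁ ≤ t := by
        have h12 : (2:ℕ)^t₁ < 2^(t+1) := lt_of_le_of_lt hm1 hhigh
        have h13 := (Nat.pow_lt_pow_iff_right (by norm_num : 1 < 2)).mp h12
        omega
      have habs : |(q:ℝ)| = (m:ℝ) := by
        rw [hm, Nat.cast_natAbs, Int.cast_abs]
      refine ⟨t, le_trans (le_max_left _ _) ht₁t, ?_⟩
      simp only [hGdef]
      rw [if_pos (le_trans (le_max_right _ _) ht₁t)]
      refine ⟨?_, hjK⟩
      simp only [hEdef, Set.mem_setOf_eq]
      refine ⟨hxI, q, ⟨?_, ?_⟩, hqv⟩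
      · rw [habs]
        exact_mod_cast Nat.cast_le.mpr hlow
      · rw [habs]
        exact_mod_cast Nat.cast_lt.mpr hhigh
    · refine Or.inl ?_
      push_neg at hk
      have hsel : ∀ j : ℕ, ∃ d : ℤ, d ≠ 0 ∧
          vnorm (fun i => (d:ℝ) * f x i) < ((j:ℝ)+1)⁻¹ * |(d:ℝ)| ^ e₂ := by
        intro j
        have hj := hk j
        simp only [hKdef, Set.mem_setOf_eq] at hj
        push_neg at hj
        obtain ⟨d, hd0, hdlt⟩ := hj hxI
        exact ⟨d, hd0, hdlt⟩
      choose dd hdd0 hddlt using hsel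
      have habs1 : ∀ j : ℕ, (1:ℝ) ≤ |((dd j : ℤ):ℝ)| := by
        intro j
        have h1 : (1:ℤ) ≤ |dd j| := Int.one_le_abs (hdd0 j)
        calc (1:ℝ) ≤ ((|dd j| : ℤ) : ℝ) := by exact_mod_cast h1
          _ = |((dd j : ℤ):ℝ)| := by push_cast; rfl
      have hDsub : Set.range dd ⊆ {d : ℤ | d ≠ 0 ∧
          vnorm (fun i => (d:ℝ) * f x i) < |(d:ℝ)| ^ e₂} := by
        rintro d ⟨j, rfl⟩
        refine ⟨hdd0 j, lt_of_lt_of_le (hddlt j) ?_⟩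
        have h1 : (0:ℝ) ≤ |((dd j : ℤ):ℝ)| ^ e₂ :=
          (Real.rpow_pos_of_pos (by linarith [habs1 j]) _).le
        exact mul_le_of_le_one_left h1 (hκle1 j)
      rcases Set.finite_or_infinite (Set.range dd) with hfin | hinf
      · have hne : (Set.range dd).Nonempty := ⟨dd 0, Set.mem_range_self 0⟩
        obtain ⟨d₀, hd₀mem, hd₀min⟩ := Set.exists_min_image (Set.range dd)
          (fun d => vnorm (fun i => ((d:ℤ):ℝ) * f x i)) hfin hne
        obtain ⟨j₀, hj₀⟩ := hd₀mem
        rcases le_or_gt (vnorm (fun i => ((d₀:ℤ):ℝ) * f x i)) 0 with hg | hg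
        · refine Or.inr ?_
          have hz : vnorm (fun i => ((d₀:ℤ):ℝ) * f x i) = 0 := le_antisymm hg (hv0 _)
          have hcz : dnint ((d₀:ℝ) * f x i₀) = 0 := by
            refine le_antisymm ?_ (dnint_nonneg _)
            rw [← hz]
            exact coord_le_vnorm (fun i => ((d₀:ℤ):ℝ) * f x i) i₀
          have hfx : f x i₀ = x := hf1 x hxI
          rw [hfx] at hcz
          obtain ⟨mz, hmz⟩ := dnint_eq_zero hcz
          refine ⟨mz, d₀, ?_, hmz⟩
          rw [← hj₀]
          exact hdd0 j₀
        · exfalso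
          obtain ⟨j, hj⟩ := exists_nat_gt (vnorm (fun i => ((d₀:ℤ):ℝ) * f x i))⁻¹
          have hκlt : ((j:ℝ)+1)⁻¹ < vnorm (fun i => ((d₀:ℤ):ℝ) * f x i) := by
            have h14 : (vnorm (fun i => ((d₀:ℤ):ℝ) * f x i))⁻¹ < (j:ℝ)+1 := by linarith
            calc ((j:ℝ)+1)⁻¹ < ((vnorm (fun i => ((d₀:ℤ):ℝ) * f x i))⁻¹)⁻¹ := by
                  apply inv_strictAnti₀ (by positivity) h14
              _ = vnorm (fun i => ((d₀:ℤ):ℝ) * f x i) := inv_inv _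
          have hmem := hd₀min (dd j) (Set.mem_range_self j)
          have hles : vnorm (fun i => ((dd j:ℤ):ℝ) * f x i) < ((j:ℝ)+1)⁻¹ := by
            refine lt_of_lt_of_le (hddlt j) ?_
            have h15 : |((dd j : ℤ):ℝ)| ^ e₂ ≤ 1 :=
              Real.rpow_le_one_of_one_le_of_nonpos (habs1 j) he₂0.le
            exact mul_le_of_le_one_right (hκpos j).le h15
          linarith
      · exact Or.inl ⟨hxI, hinf.mono hDsub⟩
  refine measure_mono_null hsub ?_
  apply measure_union_null
  · exact measure_union_null hZ1 hZ2
  · exact measure_iUnion_null hBC
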